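/- Let p be a prime and let d be a positive integer dividing p − 1 with d < p − 1. Let Z_d = {z ∈ 𝔽_p : z^d = 1}. If A, B ⊆ 𝔽_p are finite sets with A + B = Z_d, then |A| · |B| = d and all sums are distinct, i.e., the map A × B → 𝔽_p given by (a, b) ↦ a + b is injective. -/

import Mathlib

open Pointwise

open Polynomial Finset Pointwise


private lemma coeff_basis_eq {F : Type*} [Field F] [DecidableEq F] (A : Finset F) {a : F}
    (ha : a ∈ A) :
    (Lagrange.basis A id a).coeff (A.card - 1) = Lagrange.nodalWeight A id a := by
  rw [Lagrange.basis_eq_prod_sub_inv_mul_nodal_div ha, ← Lagrange.nodal_erase_eq_nodal_div ha,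
    coeff_C_mul]
  have h1 : (Lagrange.nodal (A.erase a) id).natDegree = A.card - 1 := by
    rw [Lagrange.natDegree_nodal, card_erase_of_mem ha]
  rw [← h1, Lagrange.nodal_monic.coeff_natDegree, mul_one]

private lemma sum_nodalWeight_mul_eval {F : Type*} [Field F] [DecidableEq F] (A : Finset F)
    (q : Polynomial F) (hq : q.degree < A.card) :
    ∑ a ∈ A, Lagrange.nodalWeight A id a * q.eval a = q.coeff (A.card - 1) := by
  have h1 := Lagrange.eq_interpolate (v := id) (f := q) (Set.injOn_id _) hq
  conv_rhs => rw [h1]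
  rw [Lagrange.interpolate_apply, Polynomial.finset_sum_coeff]
  exact Finset.sum_congr rfl fun a ha => by
    rw [Polynomial.coeff_C_mul, coeff_basis_eq A ha, id_eq, mul_comm]

private lemma sum_w_shift {F : Type*} [Field F] [DecidableEq F] (A : Finset F) (b : F) {t : ℕ}
    (ht : t < A.card) :
    ∑ a ∈ A, Lagrange.nodalWeight A id a * (a + b) ^ t
      = if t = A.card - 1 then 1 else 0 := by
  have hdeg : ((X + C b : Polynomial F) ^ t).degree < A.card := by
    rw [degree_pow, degree_X_add_C]
    simpa using by exact_mod_cast ht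
  have h := sum_nodalWeight_mul_eval A ((X + C b) ^ t) hdeg
  simp only [eval_pow, eval_add, eval_X, eval_C] at h
  rw [h, coeff_X_add_C_pow]
  rcases eq_or_lt_of_le (Nat.le_sub_one_of_lt ht) with he | hl
  · rw [if_pos he, he, Nat.sub_self, pow_zero, Nat.choose_self, Nat.cast_one, mul_one]
  · rw [if_neg (Nat.ne_of_lt hl), Nat.choose_eq_zero_of_lt hl, Nat.cast_zero, mul_zero]

private lemma key_bound (p : ℕ) (hp : p.Prime) (d : ℕ) (hd : 0 < d)
    (A B : Finset (ZMod p)) (hA : A.Nonempty) (hB : B.Nonempty)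
    (hAB : ∀ a ∈ A, ∀ b ∈ B, (a + b) ^ d = 1)
    (hNp : d + (A.card - 1) < p) :
    A.card * B.card ≤ d := by
  haveI : Fact p.Prime := ⟨hp⟩
  haveI : NeZero p := ⟨hp.ne_zero⟩
  classical
  set m := A.card with hm
  have hm1 : 1 ≤ m := Finset.card_pos.mpr hA
  set N := d + (m - 1) with hN
  set w := Lagrange.nodalWeight A id with hw
  set f : Polynomial (ZMod p) := ∑ a ∈ A, C (w a) * (X + C a) ^ N with hf
  have hcoeff : ∀ k, f.coeff k = (N.choose k : ZMod p) * ∑ a ∈ A, w a * (a + 0) ^ (N - k) := by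
    intro k
    rw [hf, finset_sum_coeff, Finset.mul_sum]
    refine Finset.sum_congr rfl fun a ha => ?_
    rw [coeff_C_mul, coeff_X_add_C_pow, add_zero]
    ring
  have hNd : d ≤ N := Nat.le_add_right _ _
  have hchoose : (N.choose d : ZMod p) ≠ 0 := by
    rw [Ne, ZMod.natCast_eq_zero_iff]
    intro hdvd
    have h2 : p ∣ N.factorial := hdvd.trans
      ⟨d.factorial * (N - d).factorial, by rw [← Nat.choose_mul_factorial_mul_factorial hNd]; ring⟩
    exact absurd ((Nat.Prime.dvd_factorial hp).mp h2) (by omega)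
  have hfd : (f - 1).coeff d = (N.choose d : ZMod p) := by
    rw [coeff_sub, hcoeff, coeff_one, if_neg (by omega : ¬ d = 0), sub_zero]
    have h3 : N - d = m - 1 := by omega
    rw [h3, sum_w_shift A 0 (by omega : m - 1 < m), if_pos rfl, mul_one]
  have hfne : f - 1 ≠ 0 := fun h0 => hchoose (by rw [← hfd, h0, coeff_zero])
  have hdeg : (f - 1).natDegree ≤ d := by
    rw [natDegree_le_iff_coeff_eq_zero]
    intro k hk
    rw [coeff_sub, coeff_one, if_neg (by omega : ¬ k = 0), sub_zero, hcoeff]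
    by_cases hkN : k ≤ N
    · rw [sum_w_shift A 0 (by omega : N - k < m), if_neg (by omega), mul_zero]
    · rw [Nat.choose_eq_zero_of_lt (by omega), Nat.cast_zero, zero_mul]
  have hdvd : ∀ b ∈ B, (X - C b) ^ m ∣ f - 1 := by
    intro b hb
    have h1 : (X : Polynomial (ZMod p)) ^ m ∣ (f - 1).comp (X + C b) := by
      rw [X_pow_dvd_iff]
      intro k hk
      have hcoe : (f - 1).comp (X + C b)
          = (∑ a ∈ A, C (w a) * (X + C (a + b)) ^ N) - 1 := by
        rw [hf, sub_comp, Polynomial.sum_comp, one_comp]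
        congr 1
        refine Finset.sum_congr rfl fun a ha => ?_
        rw [mul_comp, C_comp, pow_comp, add_comp, X_comp, C_comp]
        rw [add_assoc, ← C_add, add_comm b a]
      rw [hcoe, coeff_sub, finset_sum_coeff]
      simp only [coeff_C_mul, coeff_X_add_C_pow]
      have hred : ∀ a ∈ A, w a * ((a + b) ^ (N - k) * (N.choose k : ZMod p))
          = (N.choose k : ZMod p) * (w a * (a + b) ^ (m - 1 - k)) := by
        intro a ha
        have hNk : N - k = d + (m - 1 - k) := by omega
        rw [hNk, pow_add, hAB a ha b hb, one_mul]; ring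
      rw [Finset.sum_congr rfl hred, ← Finset.mul_sum,
        sum_w_shift A b (by omega : m - 1 - k < m)]
      by_cases hk0 : k = 0
      · subst hk0
        rw [if_pos (by omega), Nat.choose_zero_right, Nat.cast_one, mul_one, coeff_one,
          if_pos rfl, sub_self]
      · rw [if_neg (by omega), mul_zero, coeff_one, if_neg hk0, sub_zero]
    obtain ⟨u, hu⟩ := h1
    have h2 : f - 1 = ((f - 1).comp (X + C b)).comp (X - C b) := by
      rw [comp_assoc]
      simp
    rw [h2, hu, mul_comp, pow_comp, X_comp]
    exact Dvd.intro _ rfl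
  have hprod : (∏ b ∈ B, (X - C b) ^ m) ∣ f - 1 := by
    refine Finset.prod_dvd_of_coprime ?_ hdvd
    intro b hb b' hb' hne
    exact (Polynomial.isCoprime_X_sub_C_of_isUnit_sub
      (sub_ne_zero.mpr hne).isUnit).pow
  have hdegprod : (∏ b ∈ B, (X - C b) ^ m).natDegree = B.card * m := by
    rw [natDegree_prod _ _ (fun b _ => pow_ne_zero _ (X_sub_C_ne_zero b))]
    simp [natDegree_pow, natDegree_X_sub_C]
  have hfin := Polynomial.natDegree_le_of_dvd hprod hfne
  rw [hdegprod] at hfin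
  calc m * B.card = B.card * m := mul_comm _ _
    _ ≤ d := le_trans hfin hdeg

theorem sumset_eq_roots_of_unity_card_and_unique_sums
    (p : ℕ) (hp : p.Prime) (d : ℕ) (hd : 0 < d)
    (hdvd : d ∣ p - 1) (hlt : d < p - 1)
    (A B : Finset (ZMod p))
    (h : (↑(A + B) : Set (ZMod p)) = {z : ZMod p | z ^ d = 1}) :
    A.card * B.card = d ∧
      ∀ a ∈ A, ∀ a' ∈ A, ∀ b ∈ B, ∀ b' ∈ B, a + b = a' + b' → a = a' ∧ b = b' := by
  haveI : Fact p.Prime := ⟨hp⟩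
  classical
  -- a primitive d-th root of unity exists
  obtain ⟨g, hg⟩ := IsCyclic.exists_generator (α := (ZMod p)ˣ)
  have horder : orderOf (g : ZMod p) = p - 1 := by
    rw [orderOf_units, orderOf_eq_card_of_forall_mem_zpowers hg, Nat.card_eq_fintype_card, ZMod.card_units p]
  have hprim : IsPrimitiveRoot (g : ZMod p) (p - 1) := by
    rw [← horder]; exact IsPrimitiveRoot.orderOf _
  obtain ⟨k, hk⟩ := hdvd
  have hζ : IsPrimitiveRoot ((g : ZMod p) ^ k) d :=
    hprim.pow (by omega) (by rw [hk, mul_comm])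
  -- A + B is the finset of d-th roots of unity
  have hfin : A + B = Polynomial.nthRootsFinset d (1 : ZMod p) := by
    apply Finset.coe_injective
    ext z
    rw [h]
    simp [Polynomial.mem_nthRootsFinset hd (1 : ZMod p), Set.mem_setOf_eq]
  have hcard : (A + B).card = d := by rw [hfin, hζ.card_nthRootsFinset]
  have hne : (A + B).Nonempty := Finset.card_pos.mp (by omega)
  have hA : A.Nonempty := (Finset.add_nonempty.mp hne).1
  have hB : B.Nonempty := (Finset.add_nonempty.mp hne).2
  have hAB : ∀ a ∈ A, ∀ b ∈ B, (a + b) ^ d = 1 := by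
    intro a ha b hb
    have : a + b ∈ (↑(A + B) : Set (ZMod p)) := Finset.add_mem_add ha hb
    rw [h] at this
    exact this
  have hmA : A.card ≤ d := by
    calc A.card ≤ (A + B).card := Finset.card_le_card_add_right hB
      _ = d := hcard
  have hk2 : 2 ≤ k := by
    rcases Nat.lt_or_ge k 2 with hk' | hk'
    · interval_cases k <;> omega
    · exact hk'
  have h2d : 2 * d ≤ p - 1 := by
    rw [hk]; calc 2 * d = d * 2 := mul_comm _ _
      _ ≤ d * k := Nat.mul_le_mul_left d hk2
  have hNp : d + (A.card - 1) < p := by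
    have := hp.two_le
    omega
  have upper : A.card * B.card ≤ d := key_bound p hp d hd A B hA hB hAB hNp
  have himg : ((A ×ˢ B).image fun x : ZMod p × ZMod p => x.1 + x.2) = A + B :=
    Finset.image_add_product
  have lower : d ≤ A.card * B.card := by
    calc d = (A + B).card := hcard.symm
      _ = ((A ×ˢ B).image fun x : ZMod p × ZMod p => x.1 + x.2).card := by rw [himg]
      _ ≤ (A ×ˢ B).card := Finset.card_image_le
      _ = A.card * B.card := Finset.card_product A B
  have heq : A.card * B.card = d := le_antisymm upper lower
  refine ⟨heq, ?_⟩
  have hinj : Set.InjOn (fun x : ZMod p × ZMod p => x.1 + x.2) ↑(A ×ˢ B) := by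
    apply Finset.injOn_of_card_image_eq
    rw [himg, hcard, Finset.card_product, heq]
  intro a ha a' ha' b hb b' hb' hsum
  have h1 : ((a, b) : ZMod p × ZMod p) ∈ (↑(A ×ˢ B) : Set (ZMod p × ZMod p)) :=
    Finset.mem_coe.mpr (Finset.mem_product.mpr ⟨ha, hb⟩)
  have h2 : ((a', b') : ZMod p × ZMod p) ∈ (↑(A ×ˢ B) : Set (ZMod p × ZMod p)) :=
    Finset.mem_coe.mpr (Finset.mem_product.mpr ⟨ha', hb'⟩)
  have := hinj h1 h2 hsum
  exact ⟨congrArg Prod.fst this, congrArg Prod.snd this⟩
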